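/- Let d1, d2, K, β be positive real numbers with β = β0 = 8(d1+d2)/K. Then the set of pairs (f,m) of nonnegative real numbers satisfying the steady-state system F1(f,m) = 0 and F2(f,m) = 0 is exactly {(0,0), (4·d2/β, 4·d1/β)}. -/

import Mathlib

/-- If `β = β₀ = 8(d₁+d₂)/K`, then the nonnegative steady states of the
system `F₁ = 0`, `F₂ = 0` are exactly `(0,0)` and `(4d₂/β, 4d₁/β)`. -/
theorem stmt4 (d1 d2 K β : ℝ) (hd1 : 0 < d1) (hd2 : 0 < d2) (hK : 0 < K) (hβ : 0 < β)
    (hβ0 : β = 8 * (d1 + d2) / K) :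
    {p : ℝ × ℝ | 0 ≤ p.1 ∧ 0 ≤ p.2 ∧
        β / 2 * p.1 * p.2 * (1 - (p.1 + p.2) / K) - d1 * p.1 = 0 ∧
        β / 2 * p.1 * p.2 * (1 - (p.1 + p.2) / K) - d2 * p.2 = 0} =
      {((0 : ℝ), (0 : ℝ)), (4 * d2 / β, 4 * d1 / β)} := by
  have hs : 0 < d1 + d2 := by linarith
  have hβ' : β * K = 8 * (d1 + d2) := by
    field_simp at hβ0; linarith
  ext ⟨f, m⟩
  simp only [Set.mem_setOf_eq, Set.mem_insert_iff, Set.mem_singleton_iff, Prod.mk.injEq]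
  constructor
  · rintro ⟨hf, hm, e1, e2⟩
    have hfm : d1 * f = d2 * m := by linarith
    rcases eq_or_lt_of_le hf with h0 | hfpos
    · left
      have : m = 0 := by nlinarith
      exact ⟨h0.symm, this⟩
    · right
      have e1' : β * f * m * (K - (f + m)) = 2 * d1 * f * K := by
        have h := e1
        field_simp at h
        nlinarith [h]
      have hm' : m = d1 * f / d2 := by
        field_simp; linarith
      have hq : (d1 * f) * ((2 * (d1 + d2) * f - d2 * K) ^ 2) = 0 := by
        have hd2' : d2 ≠ 0 := ne_of_gt hd2
        rw [hm'] at e1'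
        field_simp at e1'
        linear_combination (-(K / 2)) * d1 * f * e1' +
          ((1 / 2) * d1 * d2 * K * f ^ 2 - (1 / 2) * d1 * (d1 + d2) * f ^ 3) * hβ'
      have hf' : 2 * (d1 + d2) * f = d2 * K := by
        have hne : d1 * f ≠ 0 := by positivity
        have := (mul_eq_zero.mp hq).resolve_left hne
        have := pow_eq_zero_iff (n := 2) (by norm_num) |>.mp this
        linarith
      constructor
      · rw [eq_div_iff (ne_of_gt hβ)]
        have h2 : (2 * (d1 + d2)) * (f * β - 4 * d2) = 0 := by
          linear_combination β * hf' + d2 * hβ'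
        have := (mul_eq_zero.mp h2).resolve_left (by positivity)
        linarith
      · rw [eq_div_iff (ne_of_gt hβ)]
        have h2 : (2 * (d1 + d2) * d2) * (m * β - 4 * d1) = 0 := by
          linear_combination (-2 * (d1 + d2) * β) * hfm + d1 * β * hf' + d1 * d2 * hβ'
        have := (mul_eq_zero.mp h2).resolve_left (by positivity)
        linarith
  · rintro (⟨rfl, rfl⟩ | ⟨rfl, rfl⟩)
    · norm_num
    · refine ⟨by positivity, by positivity, ?_, ?_⟩ <;>
      · field_simp
        linear_combination (8 * d1 * d2) * hβ'
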